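/- Assume q ≡ 2 (mod 4) and Λ > q/2. Let r = 1/q − 1/(2Λ) and c_m = 2m/q for integers m with 0 ≤ m < (q+2)/4. Then: (i) p vanishes identically on [c_m − r, c_m + r] ∩ [0,1/2] for each such m; (ii) every nonempty open interval J ⊆ (0,1/2) on which p is constant is contained in some [c_m − r, c_m + r], and the constant value of p on J is 0. -/

import Mathlib

noncomputable def e (x : ℝ) : ℂ := Complex.exp (2 * Real.pi * Complex.I * x)

noncomputable def G (a k : ℤ) (q : ℕ) : ℂ :=
  ∑ ℓ ∈ Finset.range q, e (((a * ℓ ^ 2 + k * ℓ : ℤ) : ℝ) / q)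

noncomputable def invMod (a : ℤ) (q : ℕ) : ℕ := ZMod.val ((a : ZMod q)⁻¹)

noncomputable def cc (a : ℤ) (q : ℕ) (k : ℤ) : ℂ :=
  if Odd q then e ((invMod (4 * a) q : ℝ) * (k : ℝ) ^ 2 / q)
  else if Even (k + (q : ℤ) / 2) then
    (Real.sqrt 2 : ℂ) * e ((invMod a q : ℝ) * (k : ℝ) ^ 2 / (4 * q))
  else 0

noncomputable def Iset (Λ : ℝ) (q : ℕ) (x : ℝ) : Finset ℤ :=
  Finset.Icc ⌈x * q - q / (2 * Λ)⌉ ⌊x * q + q / (2 * Λ)⌋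

noncomputable def pden (N q : ℕ) (Λ : ℝ) (a : ℤ) (x : ℝ) : ℝ :=
  (4 * Λ / q) * (‖∑ k ∈ Iset Λ q x,
    cc a q k * (Real.sin (2 * Real.pi * N * Λ * (x - k / q)) : ℂ)‖) ^ 2

noncomputable def Splus (N q : ℕ) (Λ : ℝ) (a : ℤ) (x : ℝ) : ℂ :=
  ∑ k ∈ Iset Λ q x, cc a q k * e (N * Λ * k / q)

noncomputable def Sminus (N q : ℕ) (Λ : ℝ) (a : ℤ) (x : ℝ) : ℂ :=
  ∑ k ∈ Iset Λ q x, cc a q k * e (-(N * Λ * k / q))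

def Nonsingular (Λ : ℝ) (q : ℕ) (x : ℝ) : Prop :=
  (Odd q → ∀ n : ℤ, x * q - q / (2 * Λ) ≠ n ∧ x * q + q / (2 * Λ) ≠ n) ∧
  (Even q → ∀ n : ℤ, Even n →
    x * q - q / (2 * Λ) + q / 2 ≠ n ∧ x * q + q / (2 * Λ) + q / 2 ≠ n)

noncomputable def Dnear (x : ℝ) : ℝ := |x - round x|

lemma e_abs (x : ℝ) : ‖e x‖ = 1 := by
  have : (2 * Real.pi * Complex.I * (x:ℂ)) = ((2 * Real.pi * x : ℝ) : ℂ) * Complex.I := by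
    push_cast; ring
  rw [e, this, Complex.norm_exp_ofReal_mul_I]

lemma not_odd_q {q : ℕ} (h2 : q % 4 = 2) : ¬ Odd q := by
  rw [Nat.odd_iff]; omega

lemma cc_even {a : ℤ} {q : ℕ} {k : ℤ} (h2 : q % 4 = 2) (hk : Even k) : cc a q k = 0 := by
  rw [cc, if_neg (not_odd_q h2), if_neg]
  have hk' : k % 2 = 0 := Int.even_iff.mp hk
  have hq' : (q:ℤ) % 4 = 2 := by omega
  rw [Int.even_iff]
  omega

lemma cc_odd {a : ℤ} {q : ℕ} {k : ℤ} (h2 : q % 4 = 2) (hk : Odd k) :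
    cc a q k = (Real.sqrt 2 : ℂ) * e ((invMod a q : ℝ) * (k : ℝ) ^ 2 / (4 * q)) := by
  rw [cc, if_neg (not_odd_q h2), if_pos]
  have hk' : k % 2 = 1 := Int.odd_iff.mp hk
  have hq' : (q:ℤ) % 4 = 2 := by omega
  rw [Int.even_iff]
  omega

lemma cc_odd_abs {a : ℤ} {q : ℕ} {k : ℤ} (h2 : q % 4 = 2) (hk : Odd k) :
    ‖cc a q k‖ = Real.sqrt 2 := by
  rw [cc_odd h2 hk, norm_mul, e_abs, mul_one, Complex.norm_real, Real.norm_eq_abs,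
    abs_of_nonneg (Real.sqrt_nonneg 2)]

lemma mem_Iset {Λ : ℝ} {q : ℕ} {x : ℝ} {k : ℤ} :
    k ∈ Iset Λ q x ↔ x * q - q / (2 * Λ) ≤ k ∧ (k : ℝ) ≤ x * q + q / (2 * Λ) := by
  rw [Iset, Finset.mem_Icc, Int.ceil_le, Int.le_floor]

lemma part_i (Λ : ℝ) (hΛ : 1 < Λ) (N : ℕ) (a : ℤ) (q : ℕ)
    (hq : 0 < q) (h2 : q % 4 = 2) (hfrag : (q : ℝ) / 2 < Λ) (m : ℤ)
    (x : ℝ) (hx1 : 2 * (m : ℝ) / q - (1 / q - 1 / (2 * Λ)) ≤ x)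
    (hx2 : x ≤ 2 * (m : ℝ) / q + (1 / q - 1 / (2 * Λ))) :
    pden N q Λ a x = 0 := by
  have hΛ0 : (0:ℝ) < Λ := by linarith
  have hq0 : (0:ℝ) < q := Nat.cast_pos.mpr hq
  have hsum : (∑ k ∈ Iset Λ q x,
      cc a q k * (Real.sin (2 * Real.pi * N * Λ * (x - k / q)) : ℂ)) = 0 := by
    apply Finset.sum_eq_zero
    intro k hk
    rcases Int.even_or_odd k with hke | hko
    · rw [cc_even h2 hke, zero_mul]
    · -- k is odd; bounds
      rw [mem_Iset] at hk
      have hΛne : Λ ≠ 0 := ne_of_gt hΛ0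
      have hqne : (q:ℝ) ≠ 0 := ne_of_gt hq0
      have he1 : (2*(m:ℝ)/q - (1/q - 1/(2*Λ))) * q = (2*(m:ℝ) - 1) + q/(2*Λ) := by
        field_simp
        ring
      have he2 : (2*(m:ℝ)/q + (1/q - 1/(2*Λ))) * q = (2*(m:ℝ) + 1) - q/(2*Λ) := by
        field_simp
        ring
      have hb1 : (2*(m:ℝ) - 1) + q/(2*Λ) ≤ x * q := by
        have := mul_le_mul_of_nonneg_right hx1 (le_of_lt hq0)
        rw [he1] at this; exact this
      have hb2 : x * q ≤ (2*(m:ℝ) + 1) - q/(2*Λ) := by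
        have := mul_le_mul_of_nonneg_right hx2 (le_of_lt hq0)
        rw [he2] at this; exact this
      have hk1 : (2*(m:ℝ) - 1) ≤ k := by linarith [hk.1]
      have hk2 : (k:ℝ) ≤ 2*(m:ℝ) + 1 := by linarith [hk.2]
      have hk1' : 2*m - 1 ≤ k := by exact_mod_cast (by push_cast at hk1 ⊢; linarith : ((2*m-1 : ℤ):ℝ) ≤ k)
      have hk2' : k ≤ 2*m + 1 := by exact_mod_cast (by push_cast at hk2 ⊢; linarith : ((k : ℤ):ℝ) ≤ ((2*m+1 : ℤ):ℝ))
      have hkodd : k % 2 = 1 := Int.odd_iff.mp hko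
      have : k = 2*m - 1 ∨ k = 2*m + 1 := by omega
      rcases this with rfl | rfl
      · -- x*q - q/(2Λ) = k, so x - k/q = 1/(2Λ)
        have heq : x - (2*m-1:ℤ)/q = 1/(2*Λ) := by
          have h1 : x * q - q/(2*Λ) = ((2*m-1:ℤ):ℝ) := le_antisymm hk.1 (by push_cast; linarith)
          field_simp at h1 ⊢
          push_cast at h1 ⊢
          nlinarith [h1]
        rw [heq]
        have : 2 * Real.pi * N * Λ * (1/(2*Λ)) = N * Real.pi := by
          field_simp
        rw [this, Real.sin_nat_mul_pi, Complex.ofReal_zero, mul_zero]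
      · have heq : x - (2*m+1:ℤ)/q = -(1/(2*Λ)) := by
          have h1 : x * q + q/(2*Λ) = ((2*m+1:ℤ):ℝ) := le_antisymm (by push_cast; linarith) hk.2
          field_simp at h1 ⊢
          push_cast at h1 ⊢
          nlinarith [h1]
        rw [heq]
        have : 2 * Real.pi * N * Λ * (-(1/(2*Λ))) = -(N * Real.pi) := by
          field_simp
        rw [this, Real.sin_neg, Real.sin_nat_mul_pi, neg_zero, Complex.ofReal_zero, mul_zero]
  rw [pden, hsum, norm_zero]
  norm_num

lemma pden_gap (Λ : ℝ) (hΛ : 1 < Λ) (N : ℕ) (a : ℤ) (q : ℕ)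
    (hq : 0 < q) (h2 : q % 4 = 2) (hfrag : (q : ℝ) / 2 < Λ) (m : ℤ)
    (x : ℝ) (hx : |x * q - (2*(m:ℝ)+1)| < q / (2*Λ)) :
    pden N q Λ a x
      = (4 * Λ / q) * 2 * (Real.sin (2 * Real.pi * N * Λ * (x - (2*(m:ℝ)+1) / q)))^2 := by
  have hΛ0 : (0:ℝ) < Λ := by linarith
  have hq0 : (0:ℝ) < q := Nat.cast_pos.mpr hq
  have hlen : (q:ℝ) / Λ < 2 := by
    rw [div_lt_iff₀ hΛ0]; linarith
  have habs := abs_lt.mp hx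
  have hmem : (2*m+1 : ℤ) ∈ Iset Λ q x := by
    rw [mem_Iset]
    constructor
    · push_cast; linarith [habs.2]
    · push_cast; linarith [habs.1]
  have hodd : Odd (2*m+1 : ℤ) := ⟨m, by ring⟩
  have hsum : (∑ k ∈ Iset Λ q x,
      cc a q k * (Real.sin (2 * Real.pi * N * Λ * (x - k / q)) : ℂ))
      = cc a q (2*m+1) * (Real.sin (2 * Real.pi * N * Λ * (x - ((2*m+1:ℤ):ℝ) / q)) : ℂ) := by
    apply Finset.sum_eq_single_of_mem _ hmem
    intro k hk hne
    rcases Int.even_or_odd k with hke | hko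
    · rw [cc_even h2 hke, zero_mul]
    · exfalso
      rw [mem_Iset] at hk
      have h1 : (2*(m:ℝ)) - 1 < k := by
        have : (2*(m:ℝ)+1) - q/Λ < x*q - q/(2*Λ) := by
          have : (q:ℝ)/Λ = q/(2*Λ) + q/(2*Λ) := by field_simp; ring
          linarith [habs.1]
        linarith [hk.1]
      have h3 : (k:ℝ) < 2*(m:ℝ) + 3 := by
        have : x*q + q/(2*Λ) < (2*(m:ℝ)+1) + q/Λ := by
          have : (q:ℝ)/Λ = q/(2*Λ) + q/(2*Λ) := by field_simp; ring
          linarith [habs.2]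
        linarith [hk.2]
      have h1' : 2*m - 1 < k := by exact_mod_cast (by push_cast; linarith : ((2*m-1 : ℤ):ℝ) < k)
      have h3' : k < 2*m + 3 := by exact_mod_cast (by push_cast; linarith : ((k:ℤ):ℝ) < ((2*m+3 : ℤ):ℝ))
      have hkodd : k % 2 = 1 := Int.odd_iff.mp hko
      omega
  rw [pden, hsum, norm_mul, cc_odd_abs h2 hodd, Complex.norm_real, Real.norm_eq_abs, mul_pow,
    Real.sq_sqrt (by norm_num : (0:ℝ) ≤ 2), sq_abs]
  push_cast
  ring

lemma deriv_zero_of_const_on {f : ℝ → ℝ} {d w α β y : ℝ} (hy : y ∈ Set.Ioo α β)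
    (hf : HasDerivAt f d y) (h : ∀ z ∈ Set.Ioo α β, f z = w) : d = 0 := by
  have hev : f =ᶠ[nhds y] (fun _ => w) :=
    Filter.eventuallyEq_of_mem (isOpen_Ioo.mem_nhds hy) h
  have : HasDerivAt (fun _ : ℝ => w) d y := HasDerivAt.congr_of_eventuallyEq hf hev.symm
  exact (this.unique (hasDerivAt_const y w)).symm ▸ rfl

lemma sin_sq_not_const (θ c w α β : ℝ) (hθ : θ ≠ 0) (hab : α < β)
    (h : ∀ y ∈ Set.Ioo α β, (Real.sin (θ * (y - c)))^2 = w) : False := by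
  have hlin : ∀ y : ℝ, HasDerivAt (fun z => θ * (z - c)) θ y := by
    intro y
    simpa using ((hasDerivAt_id y).sub_const c).const_mul θ
  have h1 : ∀ y ∈ Set.Ioo α β,
      Real.sin (θ * (y - c)) * Real.cos (θ * (y - c)) = 0 := by
    intro y hy
    have hf : HasDerivAt (fun z => (Real.sin (θ * (z - c)))^2)
        ((2:ℕ) * (Real.sin (θ * (y - c))) ^ 1 * (Real.cos (θ * (y - c)) * θ)) y :=
      (((Real.hasDerivAt_sin _).comp y (hlin y)).pow 2)
    have := deriv_zero_of_const_on hy hf h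
    have hθ' : (0:ℝ) < θ ∨ θ < 0 := hθ.lt_or_gt.symm
    simp only [pow_one, Nat.cast_ofNat] at this
    rcases mul_eq_zero.mp this with h' | h'
    · have hs : Real.sin (θ * (y - c)) = 0 := by
        rcases mul_eq_zero.mp h' with h'' | h''
        · norm_num at h''
        · exact h''
      rw [hs, zero_mul]
    · rcases mul_eq_zero.mp h' with h'' | h''
      · rw [h'', mul_zero]
      · exact absurd h'' hθ
  set y₀ := (α + β)/2 with hy₀def
  have hy₀ : y₀ ∈ Set.Ioo α β := ⟨by simp [hy₀def]; linarith, by simp [hy₀def]; linarith⟩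
  have hg : HasDerivAt (fun z => Real.sin (θ * (z - c)) * Real.cos (θ * (z - c)))
      ((Real.cos (θ * (y₀ - c)) * θ) * Real.cos (θ * (y₀ - c))
        + Real.sin (θ * (y₀ - c)) * (-Real.sin (θ * (y₀ - c)) * θ)) y₀ :=
    HasDerivAt.mul ((Real.hasDerivAt_sin _).comp y₀ (hlin y₀))
      ((Real.hasDerivAt_cos _).comp y₀ (hlin y₀))
  have hz := deriv_zero_of_const_on hy₀ hg h1
  have hsc := h1 y₀ hy₀
  have hpy := Real.sin_sq_add_cos_sq (θ * (y₀ - c))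
  set s := Real.sin (θ * (y₀ - c))
  set co := Real.cos (θ * (y₀ - c))
  have h2 : co^2 = s^2 := by
    rcases hθ.lt_or_gt with hlt | hlt <;> nlinarith [hz]
  nlinarith [hsc, h2, hpy]

theorem stmt9 (Λ : ℝ) (hΛ : 1 < Λ) (N : ℕ) (hN : 0 < N) (a : ℤ) (q : ℕ)
    (hq : 0 < q) (hcop : Int.gcd a q = 1) (h2 : q % 4 = 2) (hfrag : (q : ℝ) / 2 < Λ) :
    (∀ m : ℤ, 0 ≤ m → (m : ℝ) < ((q : ℝ) + 2) / 4 →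
      ∀ x ∈ Set.Icc (2 * (m : ℝ) / q - (1 / q - 1 / (2 * Λ)))
          (2 * (m : ℝ) / q + (1 / q - 1 / (2 * Λ))) ∩ Set.Icc (0 : ℝ) (1 / 2),
        pden N q Λ a x = 0) ∧
    (∀ l u : ℝ, l < u → Set.Ioo l u ⊆ Set.Ioo (0 : ℝ) (1 / 2) →
      (∃ v : ℝ, ∀ x ∈ Set.Ioo l u, pden N q Λ a x = v) →
      (∃ m : ℤ, 0 ≤ m ∧ (m : ℝ) < ((q : ℝ) + 2) / 4 ∧
        Set.Ioo l u ⊆ Set.Icc (2 * (m : ℝ) / q - (1 / q - 1 / (2 * Λ)))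
          (2 * (m : ℝ) / q + (1 / q - 1 / (2 * Λ)))) ∧
      ∀ x ∈ Set.Ioo l u, pden N q Λ a x = 0) := by
  have hΛ0 : (0:ℝ) < Λ := by linarith
  have hq0 : (0:ℝ) < q := Nat.cast_pos.mpr hq
  have hΛne : Λ ≠ 0 := ne_of_gt hΛ0
  have hqne : (q:ℝ) ≠ 0 := ne_of_gt hq0
  have hhalf : 0 < (q:ℝ)/(2*Λ) ∧ (q:ℝ)/(2*Λ) < 1 := by
    constructor
    · positivity
    · rw [div_lt_one (by positivity)]; linarith
  constructor
  · intro m _ _ x hx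
    exact part_i Λ hΛ N a q hq h2 hfrag m x hx.1.1 hx.1.2
  · intro l u hlu hsub ⟨v, hv⟩
    -- no point of (l,u) is in a gap
    have hnogap : ∀ x ∈ Set.Ioo l u, ∀ m : ℤ,
        ¬ (|x * q - (2*(m:ℝ)+1)| < (q:ℝ) / (2*Λ)) := by
      intro x hx m hcon
      have hN' : (0:ℝ) < N := Nat.cast_pos.mpr hN
      have hθ : (2 * Real.pi * (N:ℝ) * Λ) ≠ 0 := by positivity
      set δ := min (min (x - l) (u - x)) (((q:ℝ)/(2*Λ) - |x*q - (2*(m:ℝ)+1)|)/q) with hδdef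
      have hδ0 : 0 < δ := by
        apply lt_min (lt_min (by linarith [hx.1]) (by linarith [hx.2]))
        apply div_pos (by linarith) hq0
      apply sin_sq_not_const (2 * Real.pi * (N:ℝ) * Λ) ((2*(m:ℝ)+1)/q) (v * q/(8*Λ))
        (x - δ) (x + δ) hθ (by linarith)
      intro y hy
      have hd1 : δ ≤ x - l := le_trans (min_le_left _ _) (min_le_left _ _)
      have hd2 : δ ≤ u - x := le_trans (min_le_left _ _) (min_le_right _ _)
      have hd3 : δ ≤ ((q:ℝ)/(2*Λ) - |x*q - (2*(m:ℝ)+1)|)/q := min_le_right _ _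
      have hy1 : y ∈ Set.Ioo l u := ⟨by linarith [hy.1], by linarith [hy.2]⟩
      have hy2 : |y*q - (2*(m:ℝ)+1)| < (q:ℝ)/(2*Λ) := by
        have hsplit : |y*q - (2*(m:ℝ)+1)| ≤ |y - x| * q + |x*q - (2*(m:ℝ)+1)| := by
          have hrw : y*q - (2*(m:ℝ)+1) = (y-x)*q + (x*q - (2*(m:ℝ)+1)) := by ring
          rw [hrw]
          refine (abs_add_le _ _).trans ?_
          rw [abs_mul, abs_of_nonneg hq0.le]
        have h2' : |y - x| < δ := abs_lt.mpr ⟨by linarith [hy.1], by linarith [hy.2]⟩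
        have h3' : δ * q ≤ (q:ℝ)/(2*Λ) - |x*q - (2*(m:ℝ)+1)| := by
          have := mul_le_mul_of_nonneg_right hd3 hq0.le
          rwa [div_mul_cancel₀ _ hqne] at this
        have h4' : |y - x| * q < δ * q := mul_lt_mul_of_pos_right h2' hq0
        linarith
      have hval := hv y hy1
      rw [pden_gap Λ hΛ N a q hq h2 hfrag m y hy2] at hval
      field_simp at hval ⊢
      linear_combination hval
    -- every point of (l,u) is in a good interval
    have hgood : ∀ x ∈ Set.Ioo l u, ∃ m' : ℤ, 0 ≤ m' ∧ (m':ℝ) < ((q:ℝ)+2)/4 ∧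
        |x*q - 2*(m':ℝ)| ≤ 1 - (q:ℝ)/(2*Λ) := by
      intro x hx
      obtain ⟨hx0, hx12⟩ := hsub hx
      have hxq : 0 < x*q ∧ x*q < (q:ℝ)/2 := by
        constructor
        · positivity
        · have := mul_lt_mul_of_pos_right hx12 hq0
          linarith
      set m' := round (x*q/2) with hm'def
      have hr : |x*q/2 - (m':ℝ)| ≤ 1/2 := abs_sub_round _
      have habs := abs_le.mp hr
      have h1 : -(1:ℝ) ≤ x*q - 2*m' ∧ x*q - 2*m' ≤ 1 := ⟨by linarith, by linarith⟩
      by_cases hcase : |x*q - 2*(m':ℝ)| ≤ 1 - (q:ℝ)/(2*Λ)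
      · have habs2 := abs_le.mp hcase
        refine ⟨m', ?_, by linarith [habs2.2, hhalf.1], hcase⟩
        have : (-1:ℝ) < 2*(m':ℝ) := by linarith [habs2.1, hhalf.2]
        have : ((-1:ℤ):ℝ) < 2*(m':ℝ) := by push_cast; linarith
        have : (-1:ℤ) < 2*m' := by exact_mod_cast (by push_cast at this ⊢; linarith : ((-1:ℤ):ℝ) < ((2*m':ℤ):ℝ))
        omega
      · exfalso
        push_neg at hcase
        rcases le_or_gt (2*(m':ℝ)) (x*q) with hge | hlt
        · apply hnogap x hx m'
          rw [abs_of_nonneg (by linarith)] at hcase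
          rw [abs_lt]
          exact ⟨by linarith, by linarith [hhalf.1, h1.2]⟩
        · apply hnogap x hx (m' - 1)
          rw [abs_of_neg (by linarith)] at hcase
          rw [abs_lt]
          push_cast
          exact ⟨by linarith [h1.1], by linarith⟩
    set x₀ := (l+u)/2 with hx₀def
    have hx₀ : x₀ ∈ Set.Ioo l u := ⟨by rw [hx₀def]; linarith, by rw [hx₀def]; linarith⟩
    obtain ⟨m, hm0, hm1, hmx⟩ := hgood x₀ hx₀
    have habsm := abs_le.mp hmx
    -- index uniqueness
    have hsame : ∀ x ∈ Set.Ioo l u, |x*q - 2*(m:ℝ)| ≤ 1 - (q:ℝ)/(2*Λ) := by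
      intro x hx
      obtain ⟨m', h0', h1', hx'⟩ := hgood x hx
      have habs' := abs_le.mp hx'
      have hmm : m' = m := by
        by_contra hne
        rcases lt_or_gt_of_ne hne with hlt | hgt
        · -- m' < m : point (2m'+1)/q is between x and x₀
          have hc : (m':ℝ) + 1 ≤ m := by exact_mod_cast Int.add_one_le_iff.mpr hlt
          have hy1 : x < (2*(m':ℝ)+1)/q := by
            rw [lt_div_iff₀ hq0]; linarith [habs'.2, hhalf.1]
          have hy2 : (2*(m':ℝ)+1)/q < x₀ := by
            rw [div_lt_iff₀ hq0]; linarith [habsm.1, hhalf.1]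
          apply hnogap ((2*(m':ℝ)+1)/q) ⟨by linarith [hx.1], by linarith [hx₀.2]⟩ m'
          rw [div_mul_cancel₀ _ hqne, sub_self, abs_zero]
          exact hhalf.1
        · have hc : (m:ℝ) + 1 ≤ m' := by exact_mod_cast Int.add_one_le_iff.mpr hgt
          have hy1 : x₀ < (2*(m:ℝ)+1)/q := by
            rw [lt_div_iff₀ hq0]; linarith [habsm.2, hhalf.1]
          have hy2 : (2*(m:ℝ)+1)/q < x := by
            rw [div_lt_iff₀ hq0]; linarith [habs'.1, hhalf.1]
          apply hnogap ((2*(m:ℝ)+1)/q) ⟨by linarith [hx₀.1], by linarith [hx.2]⟩ m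
          rw [div_mul_cancel₀ _ hqne, sub_self, abs_zero]
          exact hhalf.1
      rw [← hmm]; exact hx'
    have hsubset : Set.Ioo l u ⊆ Set.Icc (2 * (m : ℝ) / q - (1 / q - 1 / (2 * Λ)))
        (2 * (m : ℝ) / q + (1 / q - 1 / (2 * Λ))) := by
      intro x hx
      have h' := abs_le.mp (hsame x hx)
      constructor
      · rw [← mul_le_mul_iff_left₀ hq0]
        have he1 : (2*(m:ℝ)/q - (1/q - 1/(2*Λ))) * q = 2*(m:ℝ) - 1 + q/(2*Λ) := by
          field_simp; ring
        rw [he1]; linarith [h'.1]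
      · rw [← mul_le_mul_iff_left₀ hq0]
        have he2 : (2*(m:ℝ)/q + (1/q - 1/(2*Λ))) * q = 2*(m:ℝ) + 1 - q/(2*Λ) := by
          field_simp; ring
        rw [he2]; linarith [h'.2]
    refine ⟨⟨m, hm0, hm1, hsubset⟩, ?_⟩
    intro x hx
    have := hsubset hx
    exact part_i Λ hΛ N a q hq h2 hfrag m x this.1 this.2
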